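/- Let m, n, d be positive integers with d ≤ m, let Y_1, …, Y_n be i.i.d. standard Gaussian random vectors in ℝ^m, and set S = n⁻¹ Σ_{k=1}^n Y_k Y_kᵀ. Let U be a d-dimensional linear subspace of the space of diagonal m×m real matrices, and let B = { R ∈ U : ‖R‖_F ≤ 1 } be its Frobenius unit ball. Then 𝔼[ sup_{R∈B} tr( R (S − I_m) R ) ] ≤ √( 2d / n ). -/

import Mathlib

open MeasureTheory ProbabilityTheory Matrix

set_option linter.unusedSectionVars false

open MeasureTheory ProbabilityTheory Real Set Matrix
open scoped ENNReal NNReal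

lemma s19_ig_int (k : ℕ) : Integrable (fun x : ℝ => x ^ k * Real.exp (-(2⁻¹ : ℝ) * x ^ 2)) := by
  have := integrable_rpow_mul_exp_neg_mul_sq (b := (2⁻¹ : ℝ)) (by norm_num) (s := (k : ℝ)) (by linarith [Nat.cast_nonneg (α:=ℝ) k])
  simpa [Real.rpow_natCast] using this

lemma s19_ig_Ioi (k : ℕ) :
    ∫ x in Ioi (0:ℝ), x ^ k * Real.exp (-(2⁻¹:ℝ) * x ^ 2)
      = (2⁻¹:ℝ) ^ (-((k:ℝ) + 1) / 2) * (1 / 2) * Real.Gamma (((k:ℝ) + 1) / 2) := by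
  have := integral_rpow_mul_exp_neg_mul_rpow (p := (2:ℝ)) (q := (k:ℝ)) (b := (2⁻¹:ℝ))
    (by norm_num) (by linarith [Nat.cast_nonneg (α:=ℝ) k]) (by norm_num)
  rw [← this]
  refine setIntegral_congr_fun measurableSet_Ioi (fun x hx => ?_)
  rw [Real.rpow_natCast, Real.rpow_two]

lemma s19_ig_line (k : ℕ) (hk : Even k) :
    ∫ x : ℝ, x ^ k * Real.exp (-(2⁻¹:ℝ) * x ^ 2)
      = 2 * ((2⁻¹:ℝ) ^ (-((k:ℝ) + 1) / 2) * (1 / 2) * Real.Gamma (((k:ℝ) + 1) / 2)) := by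
  have hint := s19_ig_int k
  rw [← intervalIntegral.integral_Iic_add_Ioi hint.integrableOn hint.integrableOn]
  have : (∫ x in Iic (0:ℝ), x ^ k * Real.exp (-(2⁻¹:ℝ) * x ^ 2))
      = ∫ x in Ioi (0:ℝ), x ^ k * Real.exp (-(2⁻¹:ℝ) * x ^ 2) := by
    have h := integral_comp_neg_Ioi (c := (0:ℝ)) (f := fun x => x ^ k * Real.exp (-(2⁻¹:ℝ) * x ^ 2))
    simp only [neg_zero] at h
    rw [← h]
    refine setIntegral_congr_fun measurableSet_Ioi (fun x _ => ?_)
    simp only [hk.neg_pow, neg_sq]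
  rw [this, s19_ig_Ioi]; ring

lemma s19_g_meas_pdf : Measurable fun x => (gaussianPDFReal 0 1 x).toNNReal :=
  (measurable_gaussianPDFReal 0 1).real_toNNReal

lemma s19_g_withDensity :
    gaussianReal 0 1 = volume.withDensity fun x => ((gaussianPDFReal 0 1 x).toNNReal : ℝ≥0∞) := by
  rw [gaussianReal_of_var_ne_zero _ one_ne_zero]
  rfl

lemma s19_g_integral (f : ℝ → ℝ) :
    ∫ x, f x ∂(gaussianReal 0 1) = ∫ x, gaussianPDFReal 0 1 x * f x := by
  rw [s19_g_withDensity, integral_withDensity_eq_integral_smul s19_g_meas_pdf]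
  refine integral_congr_ae (Filter.Eventually.of_forall fun x => ?_)
  simp [NNReal.smul_def, Real.coe_toNNReal _ (gaussianPDFReal_nonneg 0 1 x)]

lemma s19_g_integrable (k : ℕ) : Integrable (fun x => x ^ k) (gaussianReal 0 1) := by
  rw [s19_g_withDensity, integrable_withDensity_iff_integrable_smul s19_g_meas_pdf]
  have : Integrable (fun x : ℝ => gaussianPDFReal 0 1 x * x ^ k) := by
    have h := (s19_ig_int k).const_mul (√(2 * π))⁻¹
    refine h.congr (Filter.Eventually.of_forall fun x => ?_)
    simp only [gaussianPDFReal, NNReal.coe_one]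
    norm_num
    ring_nf
  refine this.congr (Filter.Eventually.of_forall fun x => ?_)
  simp [NNReal.smul_def, Real.coe_toNNReal _ (gaussianPDFReal_nonneg 0 1 x)]

lemma s19_pdf01 (x : ℝ) : gaussianPDFReal 0 1 x = (√(2*π))⁻¹ * rexp (-(2⁻¹:ℝ) * x^2) := by
  simp only [gaussianPDFReal, NNReal.coe_one, mul_one, sub_zero]
  ring_nf

lemma s19_g_moment (k : ℕ) (hk : Even k) : ∫ x, x ^ k ∂(gaussianReal 0 1)
    = (√(2*π))⁻¹ * (2 * ((2⁻¹:ℝ) ^ (-((k:ℝ)+1)/2) * (1/2) * Real.Gamma (((k:ℝ)+1)/2))) := by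
  rw [s19_g_integral, ← s19_ig_line k hk, ← integral_const_mul]
  refine integral_congr_ae (Filter.Eventually.of_forall fun x => ?_)
  simp only [s19_pdf01]; ring

lemma s19_g_m2 : ∫ x, x ^ 2 ∂(gaussianReal 0 1) = 1 := by
  rw [s19_g_moment 2 (by norm_num)]
  have e1 : -(((2:ℕ):ℝ)+1)/2 = -((3:ℝ)/2) := by norm_num
  have e2 : (((2:ℕ):ℝ)+1)/2 = 1/2 + 1 := by norm_num
  have h2 : (2⁻¹:ℝ) ^ (-((3:ℝ)/2)) = 2 ^ ((3:ℝ)/2) := by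
    rw [Real.inv_rpow (by norm_num), ← Real.rpow_neg (by norm_num), neg_neg]
  have h3 : (2:ℝ) ^ ((3:ℝ)/2) = 2 * √2 := by
    rw [show (3:ℝ)/2 = 1 + 1/2 by norm_num, Real.rpow_add two_pos, Real.rpow_one,
      ← Real.sqrt_eq_rpow]
  rw [e1, e2, h2, h3, Real.Gamma_add_one (by norm_num), Real.Gamma_one_half_eq,
    Real.sqrt_mul (by norm_num : (0:ℝ) ≤ 2)]
  have hπ : √π ≠ 0 := by positivity
  have h2' : √2 ≠ 0 := by positivity
  field_simp

lemma s19_g_m4 : ∫ x, x ^ 4 ∂(gaussianReal 0 1) = 3 := by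
  rw [s19_g_moment 4 ⟨2, rfl⟩]
  have e1 : -(((4:ℕ):ℝ)+1)/2 = -((5:ℝ)/2) := by norm_num
  have e2 : (((4:ℕ):ℝ)+1)/2 = 3/2 + 1 := by norm_num
  have h2 : (2⁻¹:ℝ) ^ (-((5:ℝ)/2)) = 2 ^ ((5:ℝ)/2) := by
    rw [Real.inv_rpow (by norm_num), ← Real.rpow_neg (by norm_num), neg_neg]
  have h3 : (2:ℝ) ^ ((5:ℝ)/2) = 4 * √2 := by
    rw [show (5:ℝ)/2 = 2 + 1/2 by norm_num, Real.rpow_add two_pos, ← Real.sqrt_eq_rpow,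
      show (2:ℝ) = ((2:ℕ):ℝ) from by norm_num, Real.rpow_natCast]
    norm_num
  have hG : Real.Gamma (3/2 + 1) = 3/2 * (√π / 2) := by
    rw [Real.Gamma_add_one (by norm_num), show (3:ℝ)/2 = 1/2 + 1 by norm_num,
      Real.Gamma_add_one (by norm_num), Real.Gamma_one_half_eq]
    ring
  rw [e1, e2, h2, h3, hG, Real.sqrt_mul (by norm_num : (0:ℝ) ≤ 2)]
  have hπ : √π ≠ 0 := by positivity
  have h2' : √2 ≠ 0 := by positivity
  field_simp
  ring

section OmegaLevel
variable {Ω : Type} [MeasureSpace Ω] [IsProbabilityMeasure (ℙ : Measure Ω)]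

lemma s19_law_pow {X : Ω → ℝ} (hX : Measurable X)
    (hlaw : Measure.map X ℙ = gaussianReal 0 1) (k : ℕ) :
    Integrable (fun ω => X ω ^ k) ℙ ∧ ∫ ω, X ω ^ k ∂ℙ = ∫ x, x ^ k ∂(gaussianReal 0 1) := by
  have hmeas : AEStronglyMeasurable (fun x : ℝ => x ^ k) (Measure.map X ℙ) := by
    rw [hlaw]; exact (measurable_id.pow_const k).aestronglyMeasurable
  constructor
  · have := (integrable_map_measure hmeas hX.aemeasurable).mp
      (by rw [hlaw]; exact s19_g_integrable k)
    exact this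
  · have := integral_map hX.aemeasurable hmeas
    rw [hlaw] at this
    exact this.symm

lemma s19_avg_sq (n : ℕ) (hn : 0 < n)
    (X : Fin n → Ω → ℝ) (hXmeas : ∀ k, Measurable (X k))
    (hlaw : ∀ k, Measure.map (X k) ℙ = gaussianReal 0 1)
    (hind : ∀ k l, k ≠ l → IndepFun (X k) (X l) ℙ) :
    Integrable (fun ω => ((n:ℝ)⁻¹ * (∑ k, X k ω ^ 2) - 1)^2) ℙ ∧
      ∫ ω, ((n:ℝ)⁻¹ * (∑ k, X k ω ^ 2) - 1)^2 ∂ℙ = 2 / (n:ℝ) := by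
  set Z : Fin n → Ω → ℝ := fun k ω => X k ω ^ 2 - 1 with hZ
  have hsq : Measurable (fun x : ℝ => x ^ 2 - 1) :=
    (measurable_id.pow_const 2).sub measurable_const
  have hZmeas : ∀ k, Measurable (Z k) := fun k => ((hXmeas k).pow_const 2).sub measurable_const
  have hZint : ∀ k, Integrable (Z k) ℙ := by
    intro k
    have := ((s19_law_pow (hXmeas k) (hlaw k) 2).1).sub (integrable_const (1:ℝ))
    simpa [Pi.sub_def] using this
  have hEZ : ∀ k, ∫ ω, Z k ω ∂ℙ = 0 := by
    intro k
    have h1 := (s19_law_pow (hXmeas k) (hlaw k) 2).1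
    simp only [hZ]
    rw [integral_sub h1 (integrable_const 1), (s19_law_pow (hXmeas k) (hlaw k) 2).2, s19_g_m2]
    simp
  have hIndZ : ∀ k l, k ≠ l → IndepFun (Z k) (Z l) ℙ := by
    intro k l hkl
    exact (hind k l hkl).comp hsq hsq
  have hZZint : ∀ k l, Integrable (fun ω => Z k ω * Z l ω) ℙ := by
    intro k l
    rcases eq_or_ne k l with rfl | hkl
    · have h4 := (s19_law_pow (hXmeas k) (hlaw k) 4).1
      have h2 := (s19_law_pow (hXmeas k) (hlaw k) 2).1
      have : Integrable (fun ω => X k ω ^ 4 - 2 * X k ω ^ 2 + 1) ℙ := by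
        have := (h4.sub (h2.const_mul 2)).add (integrable_const (1:ℝ))
        simpa [Pi.sub_def, Pi.add_def] using this
      exact this.congr (Filter.Eventually.of_forall fun ω => by simp only [hZ]; ring)
    · exact (hIndZ k l hkl).integrable_mul (hZint k) (hZint l)
  have hEZZ : ∀ k l, ∫ ω, Z k ω * Z l ω ∂ℙ = if k = l then 2 else 0 := by
    intro k l
    rcases eq_or_ne k l with rfl | hkl
    · simp only [if_pos]
      obtain h4 := s19_law_pow (hXmeas k) (hlaw k) 4
      obtain h2 := s19_law_pow (hXmeas k) (hlaw k) 2
      have I2 : Integrable (fun ω => 2 * X k ω ^ 2) ℙ := h2.1.const_mul 2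
      have I12 : Integrable (fun ω => X k ω ^ 4 - 2 * X k ω ^ 2) ℙ := by
        have := h4.1.sub I2; simpa [Pi.sub_def] using this
      have heq2 : ∫ ω, Z k ω * Z k ω ∂ℙ = ∫ ω, ((X k ω ^ 4 - 2 * X k ω ^ 2) + 1) ∂ℙ :=
        integral_congr_ae (Filter.Eventually.of_forall fun ω => by simp only [hZ]; ring)
      rw [heq2, integral_add I12 (integrable_const 1), integral_sub h4.1 I2,
        integral_const_mul, h4.2, h2.2, s19_g_m4, s19_g_m2, integral_const]
      norm_num
    · rw [if_neg hkl]
      have h := (hIndZ k l hkl).integral_mul_eq_mul_integral (hZmeas k).aestronglyMeasurable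
        (hZmeas l).aestronglyMeasurable
      have h' : ∫ ω, Z k ω * Z l ω ∂ℙ = (∫ ω, Z k ω ∂ℙ) * ∫ ω, Z l ω ∂ℙ := h
      rw [h', hEZ k, hEZ l, mul_zero]
  have key : ∀ ω, ((n:ℝ)⁻¹ * (∑ k, X k ω ^ 2) - 1)^2
      = ((n:ℝ)⁻¹)^2 * ∑ k, ∑ l, Z k ω * Z l ω := by
    intro ω
    have h1 : ((n:ℝ)⁻¹ * (∑ k, X k ω ^ 2) - 1) = (n:ℝ)⁻¹ * ∑ k, Z k ω := by
      simp only [hZ, Finset.sum_sub_distrib, Finset.sum_const, Finset.card_univ,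
        Fintype.card_fin, nsmul_eq_mul, mul_one, mul_sub]
      rw [mul_comm ((n:ℝ)⁻¹) (n:ℝ), mul_inv_cancel₀ (by positivity : (n:ℝ) ≠ 0)]
    rw [h1, mul_pow, sq ((∑ k, Z k ω)), Finset.sum_mul_sum]
  constructor
  · exact ((integrable_finset_sum _ fun k (_ : k ∈ Finset.univ) =>
      integrable_finset_sum _ fun l (_ : l ∈ Finset.univ) => hZZint k l).const_mul
      (((n:ℝ)⁻¹)^2)).congr (Filter.Eventually.of_forall fun ω => (key ω).symm)
  · rw [integral_congr_ae (Filter.Eventually.of_forall key), integral_const_mul,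
      integral_finset_sum _ fun k _ => integrable_finset_sum _ fun l _ => hZZint k l]
    have hs : ∀ k : Fin n, ∫ ω, ∑ l, Z k ω * Z l ω ∂ℙ = 2 := by
      intro k
      rw [integral_finset_sum _ fun l _ => hZZint k l]
      simp [hEZZ k]
    simp only [hs, Finset.sum_const, Finset.card_univ, Fintype.card_fin, nsmul_eq_mul]
    rw [inv_pow]
    field_simp
end OmegaLevel

lemma s19_euc_sum_sq {m : ℕ} (x : EuclideanSpace ℝ (Fin m)) : ∑ i, x i ^ 2 = ‖x‖ ^ 2 := by
  rw [EuclideanSpace.norm_eq, Real.sq_sqrt (by positivity)]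
  simp [Real.norm_eq_abs, sq_abs]

section LinAlg
variable {m : ℕ} (V : Submodule ℝ (EuclideanSpace ℝ (Fin m)))

noncomputable def s19_cc : Fin m → ℝ := fun i =>
  ∑ j, ((stdOrthonormalBasis ℝ V j : EuclideanSpace ℝ (Fin m)) i) ^ 2

lemma s19_cc_nonneg (i : Fin m) : 0 ≤ s19_cc V i := Finset.sum_nonneg fun _ _ => sq_nonneg _

lemma s19_cc_sum : ∑ i, s19_cc V i = Module.finrank ℝ V := by
  simp only [s19_cc]
  rw [Finset.sum_comm]
  have : ∀ j, ∑ i, ((stdOrthonormalBasis ℝ V j : EuclideanSpace ℝ (Fin m)) i) ^ 2 = 1 := by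
    intro j
    rw [s19_euc_sum_sq]
    have h1 : ‖stdOrthonormalBasis ℝ V j‖ = 1 := (stdOrthonormalBasis ℝ V).orthonormal.1 j
    rw [show ‖(stdOrthonormalBasis ℝ V j : EuclideanSpace ℝ (Fin m))‖
        = ‖stdOrthonormalBasis ℝ V j‖ from rfl, h1]
    norm_num
  simp [this]

lemma s19_cc_coord {x : EuclideanSpace ℝ (Fin m)} (hx : x ∈ V) (i : Fin m) :
    x i ^ 2 ≤ (∑ i', x i' ^ 2) * s19_cc V i := by
  set b := stdOrthonormalBasis ℝ V
  have hrep : ∑ j, b.repr ⟨x, hx⟩ j • b j = (⟨x, hx⟩ : V) := b.sum_repr ⟨x, hx⟩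
  have hco : x i = ∑ j, b.repr ⟨x, hx⟩ j * (b j : EuclideanSpace ℝ (Fin m)) i :=
    calc x i = ((⟨x, hx⟩ : V) : EuclideanSpace ℝ (Fin m)) i := rfl
      _ = ((∑ j, b.repr ⟨x, hx⟩ j • b j : V) : EuclideanSpace ℝ (Fin m)) i := by rw [hrep]
      _ = ∑ j, b.repr ⟨x, hx⟩ j * (b j : EuclideanSpace ℝ (Fin m)) i := by
          rw [AddSubmonoidClass.coe_finset_sum]
          simp [WithLp.ofLp_sum]
  have hcs := Finset.sum_mul_sq_le_sq_mul_sq Finset.univ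
    (fun j => b.repr ⟨x, hx⟩ j) (fun j => (b j : EuclideanSpace ℝ (Fin m)) i)
  rw [hco]
  refine le_trans hcs ?_
  have hrepr : ∑ j, b.repr ⟨x, hx⟩ j ^ 2 = ∑ i', x i' ^ 2 := by
    rw [s19_euc_sum_sq (b.repr ⟨x, hx⟩), b.repr.norm_map ⟨x, hx⟩]
    rw [s19_euc_sum_sq]
    rfl
  refine le_of_eq ?_
  rw [hrepr]
  rfl

end LinAlg

lemma s19_trace_diag {m : ℕ} {R M : Matrix (Fin m) (Fin m) ℝ} (hR : R.IsDiag) :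
    Matrix.trace (R * M * R) = ∑ i, R i i ^ 2 * M i i := by
  simp only [Matrix.trace, Matrix.diag, Matrix.mul_apply]
  refine Finset.sum_congr rfl fun i _ => ?_
  rw [Finset.sum_eq_single i]
  · rw [Finset.sum_eq_single i]
    · ring
    · intro k _ hk
      rw [hR (Ne.symm hk), zero_mul]
    · intro hi; exact absurd (Finset.mem_univ i) hi
  · intro j _ hj
    rw [hR hj, mul_zero]
  · intro hi; exact absurd (Finset.mem_univ i) hi

lemma s19_trace_tr {m : ℕ} {R : Matrix (Fin m) (Fin m) ℝ} (hR : R.IsDiag) :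
    Matrix.trace (Rᵀ * R) = ∑ i, R i i ^ 2 := by
  simp only [Matrix.trace, Matrix.diag, Matrix.mul_apply, Matrix.transpose_apply]
  refine Finset.sum_congr rfl fun i _ => ?_
  rw [Finset.sum_eq_single i]
  · ring
  · intro j _ hj
    rw [hR hj, zero_mul]
  · intro hi; exact absurd (Finset.mem_univ i) hi


/-- Expectation bound for the supremum of `tr(R (S - I) R)` over the Frobenius unit ball
`B` of a `d`-dimensional subspace `U` of diagonal matrices, where `S` is the empirical
covariance matrix of `n` i.i.d. standard Gaussian vectors in `ℝ^m`:
`𝔼[sup_{R ∈ B} tr(R (S - I) R)] ≤ √(2d/n)`. -/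
theorem stmt_19 (m n d : ℕ) (hm : 0 < m) (hn : 0 < n) (hd : 0 < d) (hdm : d ≤ m)
    (Ω : Type) [MeasureSpace Ω] [IsProbabilityMeasure (ℙ : Measure Ω)]
    (Y : Fin n → Ω → Fin m → ℝ)
    (hmeas : ∀ k i, Measurable fun ω => Y k ω i)
    (hindep : iIndepFun (fun (q : Fin n × Fin m) ω => Y q.1 ω q.2) ℙ)
    (hgauss : ∀ k i, Measure.map (fun ω => Y k ω i) ℙ = gaussianReal 0 1)
    (S : Ω → Matrix (Fin m) (Fin m) ℝ)
    (hS : ∀ ω, S ω = (n : ℝ)⁻¹ • ∑ k, Matrix.of fun i j => Y k ω i * Y k ω j)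
    (U : Submodule ℝ (Matrix (Fin m) (Fin m) ℝ))
    (hUdiag : ∀ M ∈ U, M.IsDiag)
    (hUdim : Module.finrank ℝ U = d) :
    (∫ ω, ⨆ R : {R : Matrix (Fin m) (Fin m) ℝ //
        R ∈ U ∧ Real.sqrt (Matrix.trace (Rᵀ * R)) ≤ 1},
      Matrix.trace (R.1 * (S ω - 1) * R.1)) ≤ Real.sqrt (2 * d / n) := by
  classical
  set a : Fin m → Ω → ℝ := fun i ω => (n:ℝ)⁻¹ * (∑ k, Y k ω i ^ 2) - 1 with ha
  have hAvg : ∀ i : Fin m, Integrable (fun ω => a i ω ^ 2) ℙ ∧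
      ∫ ω, a i ω ^ 2 ∂ℙ = 2 / (n:ℝ) := fun i =>
    s19_avg_sq n hn (fun k ω => Y k ω i) (fun k => hmeas k i) (fun k => hgauss k i)
      (fun k l hkl => hindep.indepFun (i := (k,i)) (j := (l,i)) (by simp [hkl]))
  have hdiagS : ∀ ω i, (S ω - 1) i i = a i ω := by
    intro ω i
    rw [Matrix.sub_apply, Matrix.one_apply_eq, hS ω]
    simp only [Matrix.smul_apply, Matrix.sum_apply, Matrix.of_apply, smul_eq_mul, ha,
      ← pow_two]
  let L : Matrix (Fin m) (Fin m) ℝ →ₗ[ℝ] EuclideanSpace ℝ (Fin m) :=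
    { toFun := fun M => WithLp.toLp 2 (fun i => M i i)
      map_add' := fun _ _ => rfl
      map_smul' := fun _ _ => rfl }
  set V : Submodule ℝ (EuclideanSpace ℝ (Fin m)) := U.map L with hV
  have hVrank : (Module.finrank ℝ V : ℝ) ≤ (d:ℝ) := by
    have := Submodule.finrank_map_le L U
    rw [hUdim] at this
    exact_mod_cast this
  set c : Fin m → ℝ := s19_cc V with hc
  have hcsum : ∑ i, c i ≤ (d:ℝ) := by rw [hc, s19_cc_sum]; exact hVrank
  set h : Ω → ℝ := fun ω => ∑ i, c i * a i ω ^ 2 with hh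
  have hh0 : ∀ ω, 0 ≤ h ω := fun ω =>
    Finset.sum_nonneg fun i _ => mul_nonneg (s19_cc_nonneg V i) (sq_nonneg _)
  set g : Ω → ℝ := fun ω => Real.sqrt (h ω) with hg
  have hPoint : ∀ ω (R : {R : Matrix (Fin m) (Fin m) ℝ //
      R ∈ U ∧ Real.sqrt (Matrix.trace (Rᵀ * R)) ≤ 1}),
      Matrix.trace (R.1 * (S ω - 1) * R.1) ≤ g ω := by
    intro ω R
    obtain ⟨R, hRU, hRnorm⟩ := R
    have hRdiag := hUdiag R hRU
    have ht1 : Matrix.trace (R * (S ω - 1) * R) = ∑ i, R i i ^ 2 * a i ω := by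
      rw [s19_trace_diag hRdiag]
      exact Finset.sum_congr rfl fun i _ => by rw [hdiagS]
    have hsum0 : 0 ≤ ∑ i, R i i ^ 2 := Finset.sum_nonneg fun i _ => sq_nonneg _
    have hsum1 : ∑ i, R i i ^ 2 ≤ 1 := by
      rw [s19_trace_tr hRdiag] at hRnorm
      nlinarith [Real.sq_sqrt hsum0, Real.sqrt_nonneg (∑ i, R i i ^ 2)]
    have hmem : (WithLp.toLp 2 (fun i => R i i) : EuclideanSpace ℝ (Fin m)) ∈ V := ⟨R, hRU, rfl⟩
    have hci : ∀ i, R i i ^ 2 ≤ c i := by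
      intro i
      calc R i i ^ 2 ≤ (∑ i', R i' i' ^ 2) * c i := s19_cc_coord V hmem i
        _ ≤ 1 * c i := mul_le_mul_of_nonneg_right hsum1 (s19_cc_nonneg V i)
        _ = c i := one_mul _
    have hCS := Finset.sum_mul_sq_le_sq_mul_sq Finset.univ
      (fun i => R i i) (fun i => R i i * a i ω)
    have e1 : ∑ i, R i i * (R i i * a i ω) = ∑ i, R i i ^ 2 * a i ω :=
      Finset.sum_congr rfl fun i _ => by ring
    have e2 : ∑ i, (R i i * a i ω) ^ 2 ≤ h ω := by
      rw [hh]
      refine Finset.sum_le_sum fun i _ => ?_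
      have : (R i i * a i ω) ^ 2 = R i i ^ 2 * a i ω ^ 2 := by ring
      rw [this]
      exact mul_le_mul_of_nonneg_right (hci i) (sq_nonneg _)
    have hs2 : (∑ i, R i i ^ 2 * a i ω) ^ 2 ≤ h ω := by
      rw [← e1]
      calc (∑ i, R i i * (R i i * a i ω)) ^ 2
          ≤ (∑ i, R i i ^ 2) * ∑ i, (R i i * a i ω) ^ 2 := hCS
        _ ≤ 1 * h ω := by
            refine mul_le_mul hsum1 e2 (Finset.sum_nonneg fun i _ => sq_nonneg _) zero_le_one
        _ = h ω := one_mul _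
    rw [ht1, hg]
    calc ∑ i, R i i ^ 2 * a i ω ≤ |∑ i, R i i ^ 2 * a i ω| := le_abs_self _
      _ = Real.sqrt ((∑ i, R i i ^ 2 * a i ω) ^ 2) := (Real.sqrt_sq_eq_abs _).symm
      _ ≤ Real.sqrt (h ω) := Real.sqrt_le_sqrt hs2
  haveI hne : Nonempty {R : Matrix (Fin m) (Fin m) ℝ //
      R ∈ U ∧ Real.sqrt (Matrix.trace (Rᵀ * R)) ≤ 1} := ⟨⟨0, U.zero_mem, by simp⟩⟩
  have hbdd : ∀ ω, BddAbove (Set.range fun R : {R : Matrix (Fin m) (Fin m) ℝ //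
      R ∈ U ∧ Real.sqrt (Matrix.trace (Rᵀ * R)) ≤ 1} =>
      Matrix.trace (R.1 * (S ω - 1) * R.1)) := by
    intro ω
    refine ⟨g ω, ?_⟩
    rintro _ ⟨R, rfl⟩
    exact hPoint ω R
  have hsup_le : ∀ ω, (⨆ R : {R : Matrix (Fin m) (Fin m) ℝ //
      R ∈ U ∧ Real.sqrt (Matrix.trace (Rᵀ * R)) ≤ 1},
      Matrix.trace (R.1 * (S ω - 1) * R.1)) ≤ g ω := fun ω => ciSup_le (hPoint ω)
  have hsup0 : ∀ ω, 0 ≤ ⨆ R : {R : Matrix (Fin m) (Fin m) ℝ //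
      R ∈ U ∧ Real.sqrt (Matrix.trace (Rᵀ * R)) ≤ 1},
      Matrix.trace (R.1 * (S ω - 1) * R.1) := by
    intro ω
    have := le_ciSup (hbdd ω) (⟨0, U.zero_mem, by simp⟩ : {R : Matrix (Fin m) (Fin m) ℝ //
      R ∈ U ∧ Real.sqrt (Matrix.trace (Rᵀ * R)) ≤ 1})
    simpa using this
  have hmeasa : ∀ i, Measurable (a i) := fun i =>
    ((Finset.measurable_sum Finset.univ fun k _ => (hmeas k i).pow_const 2).const_mul
      ((n:ℝ)⁻¹)).sub measurable_const
  have hHint : Integrable h ℙ :=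
    integrable_finset_sum _ fun i _ => ((hAvg i).1.const_mul (c i))
  have hhmeas : Measurable h :=
    Finset.measurable_sum Finset.univ fun i _ => ((hmeasa i).pow_const 2).const_mul (c i)
  have hgmeas : Measurable g := Real.continuous_sqrt.measurable.comp hhmeas
  have hgint : Integrable g ℙ := by
    refine (hHint.add (integrable_const 1)).mono' hgmeas.aestronglyMeasurable
      (Filter.Eventually.of_forall fun ω => ?_)
    rw [Real.norm_eq_abs, abs_of_nonneg (Real.sqrt_nonneg _)]
    simp only [Pi.add_apply]
    nlinarith [Real.sq_sqrt (hh0 ω), Real.sqrt_nonneg (h ω), sq_nonneg (Real.sqrt (h ω) - 1)]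
  have hHval : ∫ ω, h ω ∂ℙ ≤ 2 * d / n := by
    rw [hh, integral_finset_sum _ fun i (_ : i ∈ Finset.univ) => (hAvg i).1.const_mul (c i)]
    have hv : ∀ i : Fin m, ∫ ω, c i * a i ω ^ 2 ∂ℙ = c i * (2/(n:ℝ)) := fun i => by
      rw [integral_const_mul, (hAvg i).2]
    rw [Finset.sum_congr rfl fun i _ => hv i, ← Finset.sum_mul]
    calc (∑ i, c i) * (2/(n:ℝ)) ≤ (d:ℝ) * (2/(n:ℝ)) :=
          mul_le_mul_of_nonneg_right hcsum (by positivity)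
      _ = 2 * d / n := by ring
  have hgmem : MemLp g 2 ℙ := by
    refine (memLp_two_iff_integrable_sq hgmeas.aestronglyMeasurable).2 ?_
    refine hHint.congr (Filter.Eventually.of_forall fun ω => ?_)
    simp [hg, Real.sq_sqrt (hh0 ω)]
  have hvar := variance_nonneg g ℙ
  rw [variance_eq_sub hgmem] at hvar
  have hg2 : ∫ ω, (g ^ 2) ω ∂ℙ = ∫ ω, h ω ∂ℙ :=
    integral_congr_ae (Filter.Eventually.of_forall fun ω => by
      simp [hg, Real.sq_sqrt (hh0 ω)])
  have hEg0 : 0 ≤ ∫ ω, g ω ∂ℙ := integral_nonneg fun ω => Real.sqrt_nonneg _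
  have hEg2 : (∫ ω, g ω ∂ℙ) ^ 2 ≤ 2 * d / n := by
    have : (∫ ω, g ω ∂ℙ) ^ 2 ≤ ∫ ω, (g ^ 2) ω ∂ℙ := by linarith [hvar]
    calc (∫ ω, g ω ∂ℙ) ^ 2 ≤ ∫ ω, (g ^ 2) ω ∂ℙ := this
      _ = ∫ ω, h ω ∂ℙ := hg2
      _ ≤ 2 * d / n := hHval
  have hgle : ∫ ω, g ω ∂ℙ ≤ Real.sqrt (2 * d / n) :=
    (Real.le_sqrt hEg0 (by positivity)).2 hEg2
  exact le_trans (integral_mono_of_nonneg (Filter.Eventually.of_forall hsup0) hgint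
    (Filter.Eventually.of_forall hsup_le)) hgle
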